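/- Let a ≤ b be real numbers, let f:[a,b]→[0,1] be measurable, and let g:[a,b]→ℝ be integrable and non-decreasing on [a,b]. Put A := ∫_a^b f(t) dt. Then ∫_a^{a+A} g(t) dt ≤ ∫_a^b f(t) g(t) dt ≤ ∫_{b−A}^{b} g(t) dt. -/

import Mathlib

open MeasureTheory Filter Real

noncomputable section

/-- Lemma 5.1 of Granville–Soundararajan, "The number of unsieved integers up to x":
if `f : [a,b] → [0,1]` is measurable, `g` is integrable and non-decreasing on `[a,b]`,
and `A = ∫_a^b f(t) dt`, then
`∫_a^{a+A} g(t) dt ≤ ∫_a^b f(t)g(t) dt ≤ ∫_{b-A}^b g(t) dt`. -/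
theorem lemma5_1 (a b : ℝ) (hab : a ≤ b) (f g : ℝ → ℝ)
    (hf : Measurable f) (hf01 : ∀ t ∈ Set.Icc a b, f t ∈ Set.Icc (0:ℝ) 1)
    (hg : IntervalIntegrable g volume a b) (hgmono : MonotoneOn g (Set.Icc a b))
    (A : ℝ) (hA : A = ∫ t in a..b, f t) :
    (∫ t in a..(a + A), g t) ≤ (∫ t in a..b, f t * g t) ∧
    (∫ t in a..b, f t * g t) ≤ ∫ t in (b - A)..b, g t := by
  -- Integrability of f and f*g on [a,b]
  have hbd : ∀ᵐ x ∂(volume.restrict (Set.Ioc a b)), ‖f x‖ ≤ 1 := by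
    filter_upwards [ae_restrict_mem measurableSet_Ioc] with t ht
    have h := hf01 t (Set.Ioc_subset_Icc_self ht)
    rw [Real.norm_eq_abs, abs_le]
    exact ⟨by linarith [h.1], h.2⟩
  have hfg : IntervalIntegrable (fun t => f t * g t) volume a b := by
    rw [intervalIntegrable_iff_integrableOn_Ioc_of_le hab] at hg ⊢
    exact hg.bdd_mul hf.aestronglyMeasurable hbd
  have hfint : IntervalIntegrable f volume a b := by
    have h1 : IntervalIntegrable (fun _ : ℝ => (1:ℝ)) volume a b :=
      intervalIntegrable_const
    rw [intervalIntegrable_iff_integrableOn_Ioc_of_le hab] at h1 ⊢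
    simpa [IntegrableOn] using h1.bdd_mul hf.aestronglyMeasurable hbd
  have hA0 : 0 ≤ A := by
    rw [hA]
    exact intervalIntegral.integral_nonneg hab (fun u hu => (hf01 u hu).1)
  have hAle : A ≤ b - a := by
    have h := intervalIntegral.integral_mono_on hab hfint
      (intervalIntegrable_const (c := (1:ℝ))) (fun u hu => (hf01 u hu).2)
    rw [intervalIntegral.integral_const, smul_eq_mul, mul_one] at h
    linarith [hA ▸ h]
  have mono_sub : ∀ u v : ℝ, a ≤ u → u ≤ v → v ≤ b → ∀ {h : ℝ → ℝ},
      IntervalIntegrable h volume a b → IntervalIntegrable h volume u v := by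
    intro u v hu huv hv h hh
    refine hh.mono_set ?_
    rw [Set.uIcc_of_le huv, Set.uIcc_of_le hab]
    exact Set.Icc_subset_Icc hu hv
  constructor
  · -- left inequality
    set c := a + A with hc
    have hac : a ≤ c := by simp only [hc]; linarith
    have hcb : c ≤ b := by simp only [hc]; linarith
    have hcmem : c ∈ Set.Icc a b := ⟨hac, hcb⟩
    have hg1 := mono_sub a c le_rfl hac hcb hg
    have hfg1 := mono_sub a c le_rfl hac hcb hfg
    have hfg2 := mono_sub c b hac hcb le_rfl hfg
    have hf1 := mono_sub a c le_rfl hac hcb hfint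
    have hf2 := mono_sub c b hac hcb le_rfl hfint
    have hfg1' : IntervalIntegrable (fun t => (f t - 1) * g t) volume a c := by
      have := hfg1.sub hg1
      simpa [sub_one_mul] using this
    have key1 : (∫ t in a..c, (f t - 1) * g c) ≤ ∫ t in a..c, (f t - 1) * g t := by
      apply intervalIntegral.integral_mono_on hac
        ((hf1.sub intervalIntegrable_const).mul_const _) hfg1'
      intro t ht
      have htab : t ∈ Set.Icc a b := ⟨ht.1, le_trans ht.2 hcb⟩
      exact mul_le_mul_of_nonpos_left (hgmono htab hcmem ht.2)
        (by linarith [(hf01 t htab).2])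
    have key2 : (∫ t in c..b, f t * g c) ≤ ∫ t in c..b, f t * g t := by
      apply intervalIntegral.integral_mono_on hcb (hf2.mul_const _) hfg2
      intro t ht
      have htab : t ∈ Set.Icc a b := ⟨le_trans hac ht.1, ht.2⟩
      exact mul_le_mul_of_nonneg_left (hgmono hcmem htab ht.1) ((hf01 t htab).1)
    have split_fg : (∫ t in a..b, f t * g t)
        = (∫ t in a..c, f t * g t) + ∫ t in c..b, f t * g t :=
      (intervalIntegral.integral_add_adjacent_intervals hfg1 hfg2).symm
    have split_f : (∫ t in a..c, f t) + (∫ t in c..b, f t) = A := by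
      rw [hA]; exact intervalIntegral.integral_add_adjacent_intervals hf1 hf2
    have e1 : (∫ t in a..c, (f t - 1) * g c)
        = ((∫ t in a..c, f t) - A) * g c := by
      rw [intervalIntegral.integral_mul_const]
      congr 1
      rw [intervalIntegral.integral_sub hf1 intervalIntegrable_const,
        intervalIntegral.integral_const]
      simp [hc]
    have e2 : (∫ t in c..b, f t * g c) = (∫ t in c..b, f t) * g c := by
      rw [intervalIntegral.integral_mul_const]
    have e3 : (∫ t in a..c, (f t - 1) * g t)
        = (∫ t in a..c, f t * g t) - ∫ t in a..c, g t := by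
      rw [← intervalIntegral.integral_sub hfg1 hg1]
      simp [sub_one_mul]
    have h0 : ((∫ t in a..c, f t) - A) * g c = -((∫ t in c..b, f t) * g c) := by
      rw [show (∫ t in a..c, f t) - A = -(∫ t in c..b, f t) by linarith]; ring
    rw [split_fg]
    rw [e1, h0] at key1
    rw [e3] at key1
    rw [e2] at key2
    linarith
  · -- right inequality
    set d := b - A with hd
    have had : a ≤ d := by simp only [hd]; linarith
    have hdb : d ≤ b := by simp only [hd]; linarith
    have hdmem : d ∈ Set.Icc a b := ⟨had, hdb⟩
    have hg2 := mono_sub d b had hdb le_rfl hg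
    have hfg1 := mono_sub a d le_rfl had hdb hfg
    have hfg2 := mono_sub d b had hdb le_rfl hfg
    have hf1 := mono_sub a d le_rfl had hdb hfint
    have hf2 := mono_sub d b had hdb le_rfl hfint
    have hfg2' : IntervalIntegrable (fun t => (1 - f t) * g t) volume d b := by
      have := hg2.sub hfg2
      simpa [one_sub_mul] using this
    have key1 : (∫ t in a..d, f t * g t) ≤ ∫ t in a..d, f t * g d := by
      apply intervalIntegral.integral_mono_on had hfg1 (hf1.mul_const _)
      intro t ht
      have htab : t ∈ Set.Icc a b := ⟨ht.1, le_trans ht.2 hdb⟩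
      exact mul_le_mul_of_nonneg_left (hgmono htab hdmem ht.2) ((hf01 t htab).1)
    have key2 : (∫ t in d..b, (1 - f t) * g d) ≤ ∫ t in d..b, (1 - f t) * g t := by
      apply intervalIntegral.integral_mono_on hdb
        (((intervalIntegrable_const).sub hf2).mul_const _) hfg2'
      intro t ht
      have htab : t ∈ Set.Icc a b := ⟨le_trans had ht.1, ht.2⟩
      exact mul_le_mul_of_nonneg_left (hgmono hdmem htab ht.1)
        (by linarith [(hf01 t htab).2])
    have split_fg : (∫ t in a..b, f t * g t)
        = (∫ t in a..d, f t * g t) + ∫ t in d..b, f t * g t :=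
      (intervalIntegral.integral_add_adjacent_intervals hfg1 hfg2).symm
    have split_f : (∫ t in a..d, f t) + (∫ t in d..b, f t) = A := by
      rw [hA]; exact intervalIntegral.integral_add_adjacent_intervals hf1 hf2
    have e1 : (∫ t in a..d, f t * g d) = (∫ t in a..d, f t) * g d := by
      rw [intervalIntegral.integral_mul_const]
    have e2 : (∫ t in d..b, (1 - f t) * g d)
        = (A - (∫ t in d..b, f t)) * g d := by
      rw [intervalIntegral.integral_mul_const]
      congr 1
      rw [intervalIntegral.integral_sub intervalIntegrable_const hf2,
        intervalIntegral.integral_const]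
      simp [hd]
    have e3 : (∫ t in d..b, (1 - f t) * g t)
        = (∫ t in d..b, g t) - ∫ t in d..b, f t * g t := by
      rw [← intervalIntegral.integral_sub hg2 hfg2]
      simp [one_sub_mul]
    have h0 : (A - (∫ t in d..b, f t)) * g d = (∫ t in a..d, f t) * g d := by
      rw [show A - (∫ t in d..b, f t) = (∫ t in a..d, f t) by linarith]
    rw [split_fg]
    rw [e2, h0, e3] at key2
    rw [e1] at key1
    linarith
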